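/- Let p be a natural number and a a nonzero complex number. For every complex number z with z ≠ a, the logarithmic derivative of the function z ↦ E_p(z/a) at z equals z^p/(a^p·(z − a)); consequently, for a positive integer k, the logarithmic derivative of z ↦ E_p(z/a)^k at z equals k·z^p/(a^p·(z − a)). -/

import Mathlib

/-- The Weierstrass elementary factor: `E 0 w = 1 - w` and
`E p w = (1 - w) * exp (∑_{k=1}^p w^k / k)` for `p ≥ 1`. -/
noncomputable def elemFactor (p : ℕ) (w : ℂ) : ℂ :=
  (1 - w) * Complex.exp (∑ k ∈ Finset.Icc 1 p, w ^ k / (k : ℂ))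

/-- For `a ≠ 0` and `z ≠ a`, the logarithmic derivative of `z ↦ E p (z/a)` at `z` is
`z^p / (a^p * (z - a))`; consequently, for a positive integer `k`, the logarithmic
derivative of `z ↦ E p (z/a)^k` at `z` is `k * z^p / (a^p * (z - a))`. -/
theorem logDeriv_elemFactor (p : ℕ) (a : ℂ) (ha : a ≠ 0) (z : ℂ) (hz : z ≠ a) :
    logDeriv (fun z : ℂ => elemFactor p (z / a)) z = z ^ p / (a ^ p * (z - a)) ∧
    ∀ k : ℕ, 0 < k →
      logDeriv (fun z : ℂ => elemFactor p (z / a) ^ k) z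
        = (k : ℂ) * z ^ p / (a ^ p * (z - a)) := by
  have hza : z - a ≠ 0 := sub_ne_zero.mpr hz
  have hw : 1 - z / a ≠ 0 := by
    intro h
    apply hz
    have h1 : z / a = 1 := by linear_combination -h
    field_simp at h1
    exact h1
  -- the inner sum and its derivative
  set S : ℂ → ℂ := fun z => ∑ k ∈ Finset.Icc 1 p, (z / a) ^ k / (k : ℂ) with hS
  have hSd : ∀ x : ℂ, HasDerivAt S
      (∑ k ∈ Finset.Icc 1 p, (k : ℂ) * (x / a) ^ (k - 1) * (1 / a) / (k : ℂ)) x := by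
    intro x
    apply HasDerivAt.fun_sum
    intro k _
    simpa using (((hasDerivAt_id x).div_const a).pow k).div_const (k : ℂ)
  have hSdiff : ∀ x : ℂ, DifferentiableAt ℂ S x := fun x => (hSd x).differentiableAt
  -- value of the derivative of S at z
  have hderivS : deriv S z = a⁻¹ * ∑ j ∈ Finset.range p, (z / a) ^ j := by
    rw [(hSd z).deriv]
    have hc : ∀ k ∈ Finset.Icc 1 p,
        (k : ℂ) * (z / a) ^ (k - 1) * (1 / a) / (k : ℂ) = a⁻¹ * (z / a) ^ (k - 1) := by
      intro k hk
      have hk1 : 1 ≤ k := (Finset.mem_Icc.mp hk).1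
      have hk0 : (k : ℂ) ≠ 0 := Nat.cast_ne_zero.mpr (by omega)
      field_simp
    rw [Finset.sum_congr rfl hc, ← Finset.mul_sum]
    congr 1
    rw [← Finset.Ico_add_one_right_eq_Icc, Finset.sum_Ico_eq_sum_range]
    simp
  -- differentiability and nonvanishing of the two factors
  have hf1 : DifferentiableAt ℂ (fun z : ℂ => 1 - z / a) z := by fun_prop
  have hf2 : DifferentiableAt ℂ (fun z : ℂ => Complex.exp (S z)) z :=
    (Complex.differentiable_exp _).comp z (hSdiff z)
  have hexp : Complex.exp (S z) ≠ 0 := Complex.exp_ne_zero _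
  have hgdiff : DifferentiableAt ℂ (fun z : ℂ => elemFactor p (z / a)) z := by
    simpa [elemFactor] using hf1.fun_mul hf2
  have hmain : logDeriv (fun z : ℂ => elemFactor p (z / a)) z
      = z ^ p / (a ^ p * (z - a)) := by
    have : (fun z : ℂ => elemFactor p (z / a))
        = fun z : ℂ => (1 - z / a) * Complex.exp (S z) := rfl
    rw [this, logDeriv_mul z hw hexp hf1 hf2]
    have h1 : logDeriv (fun z : ℂ => 1 - z / a) z = 1 / (z - a) := by
      rw [logDeriv_apply]
      have : deriv (fun z : ℂ => 1 - z / a) z = -a⁻¹ := by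
        have := ((hasDerivAt_id z).div_const a).const_sub (1 : ℂ)
        simpa using this.deriv
      rw [this]
      have hza' : a - z ≠ 0 := fun h => hza (by linear_combination -h)
      field_simp
      ring
    have h2 : logDeriv (fun z : ℂ => Complex.exp (S z)) z = deriv S z := by
      have : (fun z : ℂ => Complex.exp (S z)) = Complex.exp ∘ S := rfl
      rw [this, logDeriv_comp (Complex.differentiable_exp _) (hSdiff z),
        Complex.LogDeriv_exp]
      simp
    have hgeom := geom_sum_mul (z / a) p
    set G := ∑ j ∈ Finset.range p, (z / a) ^ j with hGdef
    rw [h1, h2, hderivS]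
    have hG : a⁻¹ * G = ((z / a) ^ p - 1) / (z - a) := by
      rw [← hgeom]
      field_simp
    rw [hG, ← add_div]
    have h3 : (1 : ℂ) + ((z / a) ^ p - 1) = (z / a) ^ p := by ring
    rw [h3, div_pow, div_div]
  refine ⟨hmain, fun k hk => ?_⟩
  rw [logDeriv_fun_pow hgdiff, hmain, mul_div_assoc]
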